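/- For ξ ~ Binomial(3,p), the mean number of spreaders one spreader generates equals μ(p) = p·(5p^2 − 32p + 144)/96. -/

import Mathlib

theorem stmt9 (p : ℝ) (hp0 : 0 ≤ p) (hp1 : p ≤ 1) :
    ∑ d ∈ Finset.Icc 1 3,
        ((Nat.factorial d : ℝ) *
            ∑ j ∈ Finset.Icc 1 d, 1 / (((d : ℝ) + 1) ^ j * (Nat.factorial (d - j) : ℝ))) *
          ((Nat.choose 3 d : ℝ) * p ^ d * (1 - p) ^ (3 - d)) =
      p * (5 * p ^ 2 - 32 * p + 144) / 96 := by
  simp [Finset.sum_Icc_succ_top, Nat.factorial]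
  ring
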